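/- arXiv:2504.20705 — 4 statements merged into one kernel-verified Lean document; each statement's English description precedes it below -/
import Mathlib

section
/- Under Assumptions 1, 2 and 3, for every Δ₀ > 0, every p > 0 and every T ∈ ℤ_{≥0} there exists Δ > 0 such that for every γ ∈ (0,1), every initial state x₀ ∈ 𝒳 with σ(x₀) < Δ₀ and every strictly causal random closed-loop solution x = (x_0, x_1, …) ∈ S_γ^η(x₀): ℙ(σ(x_k) < Δ for all k ∈ {0,…,T}) > 1 − p. (Boundedness with high probability, uniformly in the discount factor.) -/
open MeasureTheory Set Filter
open scoped ENNReal NNReal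

noncomputable section

/-- Euclidean space `ℝ^k`. -/
abbrev Euc (k : ℕ) := EuclideanSpace ℝ (Fin k)

/-- A class-`𝒦∞` function: continuous, strictly increasing and unbounded on `[0, ∞)`,
nonnegative there, and vanishing at `0`. -/
def IsKInfty (α : ℝ → ℝ) : Prop :=
  ContinuousOn α (Ici 0) ∧ StrictMonoOn α (Ici 0) ∧ α 0 = 0 ∧
    (∀ s, 0 ≤ s → 0 ≤ α s) ∧ Tendsto α atTop atTop

variable {𝕏 𝕌 𝕍 Ω : Type*}

/-- The closed-loop trajectory `φ(k, x, h)` of `x⁺ = f(x, h(x), v)` driven by the random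
input sequence `vs`. -/
def traj (f : 𝕏 → 𝕌 → 𝕍 → 𝕏) (vs : ℕ → Ω → 𝕍) (h : 𝕏 → 𝕌) (x : 𝕏) : ℕ → Ω → 𝕏
  | 0 => fun _ => x
  | k + 1 => fun ω => f (traj f vs h x k ω) (h (traj f vs h x k ω)) (vs k ω)

/-- The expected infinite-horizon discounted cost `J_γ(x, h)`, valued in `[0, ∞]`. -/
def cost [MeasurableSpace Ω] (P : Measure Ω) (f : 𝕏 → 𝕌 → 𝕍 → 𝕏) (vs : ℕ → Ω → 𝕍)
    (ℓ : 𝕏 → 𝕌 → ℝ) (γ : ℝ) (x : 𝕏) (h : 𝕏 → 𝕌) : ℝ≥0∞ :=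
  ∫⁻ ω, ∑' k : ℕ, ENNReal.ofReal (γ ^ k * ℓ (traj f vs h x k ω) (h (traj f vs h x k ω))) ∂P

/-- The optimal value function `V_γ(x)` as an extended nonnegative real:
the infimum of `J_γ(x, ·)` over all admissible (measurable, `𝒳 → 𝒰`) policies. -/
def evalue [MeasurableSpace Ω] [MeasurableSpace 𝕏] [MeasurableSpace 𝕌] (P : Measure Ω)
    (X : Set 𝕏) (U : Set 𝕌) (f : 𝕏 → 𝕌 → 𝕍 → 𝕏) (vs : ℕ → Ω → 𝕍)
    (ℓ : 𝕏 → 𝕌 → ℝ) (γ : ℝ) (x : 𝕏) : ℝ≥0∞ :=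
  ⨅ h : {h : 𝕏 → 𝕌 // Measurable h ∧ MapsTo h X U}, cost P f vs ℓ γ x h.1

/-- The (real-valued) optimal value function `V_γ(x)`. -/
def value [MeasurableSpace Ω] [MeasurableSpace 𝕏] [MeasurableSpace 𝕌] (P : Measure Ω)
    (X : Set 𝕏) (U : Set 𝕌) (f : 𝕏 → 𝕌 → 𝕍 → 𝕏) (vs : ℕ → Ω → 𝕍)
    (ℓ : 𝕏 → 𝕌 → ℝ) (γ : ℝ) (x : 𝕏) : ℝ :=
  (evalue P X U f vs ℓ γ x).toReal

/-- The expectation `E[V_γ(f(x, u, v))]` of the value function after one step. -/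
def expValNext [MeasurableSpace Ω] [MeasurableSpace 𝕏] [MeasurableSpace 𝕌] (P : Measure Ω)
    (X : Set 𝕏) (U : Set 𝕌) (f : 𝕏 → 𝕌 → 𝕍 → 𝕏) (vs : ℕ → Ω → 𝕍) (v : Ω → 𝕍)
    (ℓ : 𝕏 → 𝕌 → ℝ) (γ : ℝ) (x : 𝕏) (u : 𝕌) : ℝ :=
  ∫ ω, value P X U f vs ℓ γ (f x u (v ω)) ∂P

/-- The near-optimal set-valued feedback `U_γ^η(x)`. -/
def Ufb [MeasurableSpace Ω] [MeasurableSpace 𝕏] [MeasurableSpace 𝕌] (P : Measure Ω)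
    (X : Set 𝕏) (U : Set 𝕌) (f : 𝕏 → 𝕌 → 𝕍 → 𝕏) (vs : ℕ → Ω → 𝕍) (v : Ω → 𝕍)
    (ℓ : 𝕏 → 𝕌 → ℝ) (η : 𝕏 → ℝ) (γ : ℝ) (x : 𝕏) : Set 𝕌 :=
  {u ∈ U | ℓ x u + γ * expValNext P X U f vs v ℓ γ x u ≤ value P X U f vs ℓ γ x + η x}

/-- `filt vs k` is the σ-algebra `ℱ_{k-1} = σ(v_0, …, v_{k-1})` generated by the first `k`
random inputs (so `filt vs 0` is the trivial σ-algebra `ℱ_{-1}`). -/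
def filt [MeasurableSpace 𝕍] (vs : ℕ → Ω → 𝕍) (k : ℕ) : MeasurableSpace Ω :=
  MeasurableSpace.comap (fun ω => fun i : Fin k => vs i ω) MeasurableSpace.pi

/-- Strictly causal random closed-loop solutions of `x⁺ = f(x, u, v)`, `u ∈ U_γ^η(x)`,
with initial state `x0` (Definition 1). -/
def IsSCSol [MeasurableSpace Ω] [MeasurableSpace 𝕏] [MeasurableSpace 𝕌] [MeasurableSpace 𝕍]
    (P : Measure Ω) (X : Set 𝕏) (U : Set 𝕌) (f : 𝕏 → 𝕌 → 𝕍 → 𝕏)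
    (vs : ℕ → Ω → 𝕍) (v : Ω → 𝕍) (ℓ : 𝕏 → 𝕌 → ℝ) (η : 𝕏 → ℝ)
    (γ : ℝ) (x0 : 𝕏) (xs : ℕ → Ω → 𝕏) : Prop :=
  (∀ k ω, xs k ω ∈ X) ∧ (∀ ω, xs 0 ω = x0) ∧
    ∀ k : ℕ, ∃ u : Ω → 𝕌,
      Measurable[filt vs k] u ∧
      (∀ ω, u ω ∈ Ufb P X U f vs v ℓ η γ (xs k ω)) ∧
      ∀ ω, xs (k + 1) ω = f (xs k ω) (u ω) (vs k ω)

theorem boundedness_with_high_probability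
    (n m q : ℕ) (Ω : Type) [MeasurableSpace Ω] (P : Measure Ω) [IsProbabilityMeasure P]
    (X : Set (Euc n)) (U : Set (Euc m)) (Vs : Set (Euc q))
    (hX : IsClosed X) (hU : IsClosed U) (hVs : MeasurableSet Vs)
    (f : Euc n → Euc m → Euc q → Euc n)
    (hfmaps : ∀ x ∈ X, ∀ u ∈ U, ∀ w ∈ Vs, f x u w ∈ X)
    (v : Ω → Euc q) (vs : ℕ → Ω → Euc q)
    (hv : Measurable v) (hvmem : ∀ ω, v ω ∈ Vs)
    (hvsmeas : ∀ k, Measurable (vs k)) (hvsmem : ∀ k ω, vs k ω ∈ Vs)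
    (hiid : ProbabilityTheory.iIndepFun vs P)
    (hident : ∀ k, Measure.map (vs k) P = Measure.map v P)
    (ℓ : Euc n → Euc m → ℝ) (hℓnn : ∀ x u, 0 ≤ ℓ x u)
    (η : Euc n → ℝ) (hηnn : ∀ x, 0 ≤ η x)
    -- Assumption 1 (measurability; `V_γ` finite and measurable)
    (hfmeas : Measurable fun p : Euc n × Euc m × Euc q => f p.1 p.2.1 p.2.2)
    (hℓmeas : Measurable fun p : Euc n × Euc m => ℓ p.1 p.2)
    (hηmeas : Measurable η)
    (hVfin : ∀ γ ∈ Ioo (0:ℝ) 1, ∀ x ∈ X, evalue P X U f vs ℓ γ x ≠ ⊤)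
    (hVmeas : ∀ γ ∈ Ioo (0:ℝ) 1, Measurable (value P X U f vs ℓ γ))
    -- state-space measure `σ`
    (σ : Euc n → ℝ) (hσnn : ∀ x, 0 ≤ σ x) (hσmeas : Measurable σ)
    (hσlocb : ∀ K ⊆ X, IsCompact K → Bornology.IsBounded (σ '' K))
    (hσru : ∀ B : Set ℝ, Bornology.IsBounded B → Bornology.IsBounded {x ∈ X | σ x ∈ B})
    -- Assumption 2(i): cost-controllability with lower bound
    (αV : ℝ → ℝ) (hαV : IsKInfty αV)
    (e1 e2 : ℝ) (he1 : 0 ≤ e1) (he2 : 0 ≤ e2)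
    (cγ : ℝ → ℝ) (hcγnn : ∀ γ ∈ Ioo (0:ℝ) 1, 0 ≤ cγ γ)
    (hcc : ∀ γ ∈ Ioo (0:ℝ) 1, ∀ x ∈ X,
      -e1 ≤ value P X U f vs ℓ γ x - cγ γ / (1 - γ) ∧
        value P X U f vs ℓ γ x - cγ γ / (1 - γ) ≤ e2 + αV (σ x))
    (c : ℝ) (hcnn : 0 ≤ c) (hcbd : ∀ γ ∈ Ioo (0:ℝ) 1, cγ γ ≤ c)
    -- Assumption 2(ii): detectability
    (W : Euc n → ℝ) (hWnn : ∀ x, 0 ≤ W x) (hWmeas : Measurable W)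
    (αWu αWl : ℝ → ℝ) (hαWu : IsKInfty αWu) (hαWl : IsKInfty αWl)
    (d : ℝ) (hd : 0 < d)
    (hWub : ∀ x ∈ X, W x ≤ αWu (σ x))
    (hdet : ∀ x ∈ X, ∀ u ∈ U,
      (∫ ω, W (f x u (v ω)) ∂P) - W x ≤ -αWl (σ x) + ℓ x u + d)
    -- Assumption 3: `f` and `U_{(0,1)}^η` are locally bounded
    (hflocb : ∀ K1 ⊆ X, ∀ K2 ⊆ U, ∀ K3 ⊆ Vs, IsCompact K1 → IsCompact K2 → IsCompact K3 →
      Bornology.IsBounded {y | ∃ x ∈ K1, ∃ u ∈ K2, ∃ w ∈ K3, y = f x u w})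
    (hUlocb : ∀ D ⊆ X, IsCompact D →
      Bornology.IsBounded (⋃ x ∈ D, ⋃ γ ∈ Ioo (0:ℝ) 1, Ufb P X U f vs v ℓ η γ x))
    :
    ∀ Δ0 > (0:ℝ), ∀ p > (0:ℝ), ∀ T : ℕ, ∃ Δ > (0:ℝ),
      ∀ γ ∈ Ioo (0:ℝ) 1, ∀ x0 ∈ X, σ x0 < Δ0 →
        ∀ xs : ℕ → Ω → Euc n, IsSCSol P X U f vs v ℓ η γ x0 xs →
          P {ω | ∀ k ≤ T, σ (xs k ω) < Δ} > ENNReal.ofReal (1 - p) := by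
  intro Δ0 hΔ0 p hp T
  -- Step 1: a compact set of noises carrying most of the mass.
  set μ : Measure (Euc q) := Measure.map v P with hμdef
  have hμprob : IsProbabilityMeasure μ := Measure.isProbabilityMeasure_map hv.aemeasurable
  set t : ℝ := (T : ℝ) + 1 with ht
  have htpos : (0:ℝ) < t := by positivity
  set ε : ℝ := min p 1 / (2 * t) with hε
  have hεpos : 0 < ε := by
    apply div_pos (lt_min hp one_pos) (by positivity)
  obtain ⟨K, hKVs, hKcomp, hKlt⟩ :=
    hVs.exists_isCompact_lt_add (measure_ne_top μ Vs) (ENNReal.ofReal_pos.mpr hεpos).ne'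
  have hKmeas : MeasurableSet K := hKcomp.isClosed.measurableSet
  have hμVs : μ Vs = 1 := by
    rw [hμdef, Measure.map_apply hv hVs]
    have : v ⁻¹' Vs = Set.univ := Set.eq_univ_of_forall hvmem
    rw [this, measure_univ]
  have hμKc : μ Kᶜ ≤ ENNReal.ofReal ε := by
    rw [prob_compl_eq_one_sub hKmeas]
    rw [← hμVs]
    exact tsub_le_iff_right.mpr (le_of_lt (by rw [add_comm]; exact hKlt))
  -- Step 2: the compact chain of state sets.
  obtain ⟨D, hD0sub, hDcomp, hDX, hDstep⟩ :
      ∃ D : ℕ → Set (Euc n),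
        {x ∈ X | σ x ≤ Δ0} ⊆ D 0 ∧ (∀ k, IsCompact (D k)) ∧ (∀ k, D k ⊆ X) ∧
        (∀ k, ∀ x ∈ D k, ∀ γ ∈ Ioo (0:ℝ) 1, ∀ u ∈ Ufb P X U f vs v ℓ η γ x, ∀ w ∈ K,
          f x u w ∈ D (k+1)) := by
    classical
    let Ub : Set (Euc n) → Set (Euc m) := fun Dk =>
      closure (⋃ x ∈ Dk, ⋃ γ ∈ Ioo (0:ℝ) 1, Ufb P X U f vs v ℓ η γ x)
    let step : Set (Euc n) → Set (Euc n) := fun Dk =>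
      closure {y | ∃ x ∈ Dk, ∃ u ∈ Ub Dk, ∃ w ∈ K, y = f x u w}
    let D : ℕ → Set (Euc n) := fun k =>
      Nat.rec (closure {x ∈ X | σ x ≤ Δ0}) (fun _ Dk => step Dk) k
    have hD0 : D 0 = closure {x ∈ X | σ x ≤ Δ0} := rfl
    have hDsucc : ∀ k, D (k+1) = step (D k) := fun k => rfl
    have hUbU : ∀ Dk : Set (Euc n), Ub Dk ⊆ U := by
      intro Dk
      apply closure_minimal _ hU
      intro u hu
      simp only [Set.mem_iUnion] at hu
      obtain ⟨x, _, γ, _, hu⟩ := hu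
      exact hu.1
    have hkey : ∀ k, IsCompact (D k) ∧ D k ⊆ X := by
      intro k
      induction k with
      | zero =>
        constructor
        · rw [hD0]
          apply Bornology.IsBounded.isCompact_closure
          have := hσru (Icc 0 Δ0) (Metric.isBounded_Icc 0 Δ0)
          apply Bornology.IsBounded.subset this
          intro x hx
          exact ⟨hx.1, ⟨hσnn x, hx.2⟩⟩
        · rw [hD0]
          exact closure_minimal (fun x hx => hx.1) hX
      | succ k ih =>
        obtain ⟨ihc, ihX⟩ := ih
        have hUbcomp : IsCompact (Ub (D k)) :=
          Bornology.IsBounded.isCompact_closure (hUlocb (D k) ihX ihc)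
        have hUbsub : Ub (D k) ⊆ U := hUbU (D k)
        constructor
        · rw [hDsucc]
          exact Bornology.IsBounded.isCompact_closure
            (hflocb (D k) ihX (Ub (D k)) hUbsub K hKVs ihc hUbcomp hKcomp)
        · rw [hDsucc]
          apply closure_minimal _ hX
          rintro y ⟨x, hx, u, hu, w, hw, rfl⟩
          exact hfmaps x (ihX hx) u (hUbsub hu) w (hKVs hw)
    refine ⟨D, ?_, fun k => (hkey k).1, fun k => (hkey k).2, ?_⟩
    · rw [hD0]; exact subset_closure
    · intro k x hx γ hγ u hu w hw
      rw [hDsucc]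
      apply subset_closure
      refine ⟨x, hx, u, ?_, w, hw, rfl⟩
      apply subset_closure
      simp only [Set.mem_iUnion]
      exact ⟨x, hx, γ, hγ, hu⟩
  -- Step 3: a uniform bound Δ on σ over D 0, ..., D T.
  have hMex : ∀ k, ∃ M : ℝ, ∀ x ∈ D k, σ x ≤ M := by
    intro k
    obtain ⟨C, hC⟩ := (hσlocb (D k) (hDX k) (hDcomp k)).exists_norm_le
    refine ⟨C, fun x hx => ?_⟩
    have := hC (σ x) ⟨x, hx, rfl⟩
    exact (le_abs_self _).trans (by simpa using this)
  choose M hM using hMex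
  set Δ : ℝ := max 1 ((Finset.range (T+1)).sup' ⟨0, Finset.mem_range.mpr (Nat.succ_pos T)⟩ M + 1)
    with hΔdef
  have hΔpos : 0 < Δ := lt_of_lt_of_le one_pos (le_max_left _ _)
  have hΔbig : ∀ k ≤ T, ∀ x ∈ D k, σ x < Δ := by
    intro k hk x hx
    have h1 : M k ≤ (Finset.range (T+1)).sup' _ M :=
      Finset.le_sup' M (Finset.mem_range.mpr (Nat.lt_succ_of_le hk))
    calc σ x ≤ M k := hM k x hx
      _ < (Finset.range (T+1)).sup' _ M + 1 := by linarith
      _ ≤ Δ := le_max_right _ _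
  refine ⟨Δ, hΔpos, ?_⟩
  intro γ hγ x0 hx0 hσx0 xs hsol
  obtain ⟨hxsX, hxs0, hstep⟩ := hsol
  -- the good event
  set E : Set Ω := ⋂ k ∈ Finset.range (T+1), vs k ⁻¹' K with hEdef
  have hEmeas : MeasurableSet E :=
    (Finset.range (T+1)).measurableSet_biInter (fun k _ => hKmeas.preimage (hvsmeas k))
  have hEtraj : ∀ ω ∈ E, ∀ k, k ≤ T → xs k ω ∈ D k := by
    intro ω hω k
    induction k with
    | zero =>
      intro _
      rw [hxs0 ω]
      exact hD0sub ⟨hx0, hσx0.le⟩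
    | succ k ih =>
      intro hk
      have hkT : k ≤ T := Nat.le_of_succ_le hk
      obtain ⟨u, _, humem, hux⟩ := hstep k
      have hvK : vs k ω ∈ K := by
        have : ω ∈ vs k ⁻¹' K :=
          Set.mem_iInter₂.mp hω k (Finset.mem_range.mpr (Nat.lt_succ_of_le hkT))
        exact this
      rw [hux ω]
      exact hDstep k (xs k ω) (ih hkT) γ hγ (u ω) (humem ω) (vs k ω) hvK
  have hEsub : E ⊆ {ω | ∀ k ≤ T, σ (xs k ω) < Δ} := by
    intro ω hω k hk
    exact hΔbig k hk (xs k ω) (hEtraj ω hω k hk)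
  -- probability of the bad event
  have hcompl : P Eᶜ ≤ ENNReal.ofReal (t * ε) := by
    have hEc : Eᶜ = ⋃ k ∈ Finset.range (T+1), (vs k ⁻¹' K)ᶜ := by
      rw [hEdef]
      simp [Set.compl_iInter]
    rw [hEc]
    calc P (⋃ k ∈ Finset.range (T+1), (vs k ⁻¹' K)ᶜ)
        ≤ ∑ k ∈ Finset.range (T+1), P ((vs k ⁻¹' K)ᶜ) :=
          measure_biUnion_finset_le _ _
      _ ≤ ∑ _k ∈ Finset.range (T+1), ENNReal.ofReal ε := by
          apply Finset.sum_le_sum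
          intro k _
          have h1 : (vs k ⁻¹' K)ᶜ = vs k ⁻¹' Kᶜ := rfl
          have h2 : P (vs k ⁻¹' Kᶜ) = μ Kᶜ := by
            rw [← hident k, Measure.map_apply (hvsmeas k) hKmeas.compl]
          rw [h1, h2]
          exact hμKc
      _ = (T+1 : ℕ) * ENNReal.ofReal ε := by
          rw [Finset.sum_const, Finset.card_range, nsmul_eq_mul]
      _ = ENNReal.ofReal (t * ε) := by
          rw [ENNReal.ofReal_mul htpos.le, ht]
          congr 1
          rw [← ENNReal.ofReal_natCast (T+1)]
          congr 1
          push_cast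
          ring
  have htε : t * ε = min p 1 / 2 := by
    rw [hε]
    field_simp
  have hPE : ENNReal.ofReal (1 - t * ε) ≤ P E := by
    have h1 : P E + P Eᶜ = 1 := (measure_add_measure_compl hEmeas).trans measure_univ
    have h2 : (1:ℝ≥0∞) ≤ P E + ENNReal.ofReal (t * ε) := by
      rw [← h1]
      exact add_le_add_right hcompl _
    have h3 : ENNReal.ofReal (1 - t * ε) = 1 - ENNReal.ofReal (t * ε) := by
      rw [ENNReal.ofReal_sub 1 (by positivity), ENNReal.ofReal_one]
    rw [h3]
    exact tsub_le_iff_right.mpr h2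
  have hfinal : ENNReal.ofReal (1 - p) < ENNReal.ofReal (1 - t * ε) := by
    have h1 : t * ε < p := by
      rw [htε]
      linarith [min_le_left p 1]
      
    have h2 : 0 < 1 - t * ε := by
      rw [htε]
      have : min p 1 ≤ 1 := min_le_right p 1
      linarith
    rw [ENNReal.ofReal_lt_ofReal_iff h2]
    linarith
  calc ENNReal.ofReal (1 - p) < ENNReal.ofReal (1 - t * ε) := hfinal
    _ ≤ P E := hPE
    _ ≤ P {ω | ∀ k ≤ T, σ (xs k ω) < Δ} := measure_mono hEsub
end
end

section
/- Under Assumptions 1, 2, 3 and 4, for every Δ₀ > 0, every p > 0 and every T ∈ ℤ_{≥0} there exist Δ > 0 and ε > 0 such that for every γ ∈ (0,1), every initial state x₀ ∈ 𝒳 with σ(x₀) < Δ₀ and every ε-perturbed strictly causal random closed-loop solution x = (x_0, x_1, …) ∈ S_{γ,ε}^η(x₀): ℙ(σ(x_k) < Δ for all k ∈ {0,…,T}) > 1 − p. (Robust boundedness with high probability.) -/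
open MeasureTheory Set Filter
open scoped ENNReal NNReal Pointwise

noncomputable section

variable {𝕏 𝕌 𝕍 Ω : Type*}

/-- `ε`-perturbed strictly causal random closed-loop solutions (Definition 2). -/
def IsPertSCSol {n m q : ℕ} {Ω : Type} [MeasurableSpace Ω] (P : Measure Ω)
    (X : Set (Euc n)) (U : Set (Euc m))
    (f : Euc n → Euc m → Euc q → Euc n) (vs : ℕ → Ω → Euc q) (v : Ω → Euc q)
    (ℓ : Euc n → Euc m → ℝ) (η : Euc n → ℝ) (γ ε : ℝ) (x0 : Euc n)
    (xs : ℕ → Ω → Euc n) : Prop :=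
  (∀ k ω, xs k ω ∈ X) ∧ (∀ ω, xs 0 ω = x0) ∧
    ∀ k : ℕ, ∃ (u : Ω → Euc m) (p1 p2 : Ω → Euc n) (p3 : Ω → Euc m) (p4 : Ω → Euc n),
      Measurable[filt vs k] u ∧ Measurable[filt vs k] p2 ∧ Measurable[filt vs k] p3 ∧
      Measurable[filt vs (k + 1)] p1 ∧ Measurable[filt vs (k + 1)] p4 ∧
      (∀ ω, ‖p1 ω‖ < ε) ∧ (∀ ω, ‖p2 ω‖ < ε) ∧ (∀ ω, ‖p3 ω‖ < ε) ∧ (∀ ω, ‖p4 ω‖ < ε) ∧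
      (∀ ω, u ω ∈ U) ∧
      (∀ ω, xs k ω + p2 ω ∈ X ∧ u ω - p3 ω ∈ Ufb P X U f vs v ℓ η γ (xs k ω + p2 ω)) ∧
      (∀ ω, xs k ω + p1 ω ∈ X ∧ xs (k + 1) ω = f (xs k ω + p1 ω) (u ω) (vs k ω) + p4 ω)

theorem robust_boundedness_with_high_probability
    (n m q : ℕ) (Ω : Type) [MeasurableSpace Ω] (P : Measure Ω) [IsProbabilityMeasure P]
    (X : Set (Euc n)) (U : Set (Euc m)) (Vs : Set (Euc q))
    (hX : IsClosed X) (hU : IsClosed U) (hVs : MeasurableSet Vs)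
    (f : Euc n → Euc m → Euc q → Euc n)
    (hfmaps : ∀ x ∈ X, ∀ u ∈ U, ∀ w ∈ Vs, f x u w ∈ X)
    (v : Ω → Euc q) (vs : ℕ → Ω → Euc q)
    (hv : Measurable v) (hvmem : ∀ ω, v ω ∈ Vs)
    (hvsmeas : ∀ k, Measurable (vs k)) (hvsmem : ∀ k ω, vs k ω ∈ Vs)
    (hiid : ProbabilityTheory.iIndepFun vs P)
    (hident : ∀ k, Measure.map (vs k) P = Measure.map v P)
    (ℓ : Euc n → Euc m → ℝ) (hℓnn : ∀ x u, 0 ≤ ℓ x u)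
    (η : Euc n → ℝ) (hηnn : ∀ x, 0 ≤ η x)
    -- Assumption 1 (measurability; `V_γ` finite and measurable)
    (hfmeas : Measurable fun p : Euc n × Euc m × Euc q => f p.1 p.2.1 p.2.2)
    (hℓmeas : Measurable fun p : Euc n × Euc m => ℓ p.1 p.2)
    (hηmeas : Measurable η)
    (hVfin : ∀ γ ∈ Ioo (0:ℝ) 1, ∀ x ∈ X, evalue P X U f vs ℓ γ x ≠ ⊤)
    (hVmeas : ∀ γ ∈ Ioo (0:ℝ) 1, Measurable (value P X U f vs ℓ γ))
    -- state-space measure `σ`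
    (σ : Euc n → ℝ) (hσnn : ∀ x, 0 ≤ σ x) (hσmeas : Measurable σ)
    (hσlocb : ∀ K ⊆ X, IsCompact K → Bornology.IsBounded (σ '' K))
    (hσru : ∀ B : Set ℝ, Bornology.IsBounded B → Bornology.IsBounded {x ∈ X | σ x ∈ B})
    -- Assumption 2(i): cost-controllability with lower bound
    (αV : ℝ → ℝ) (hαV : IsKInfty αV)
    (e1 e2 : ℝ) (he1 : 0 ≤ e1) (he2 : 0 ≤ e2)
    (cγ : ℝ → ℝ) (hcγnn : ∀ γ ∈ Ioo (0:ℝ) 1, 0 ≤ cγ γ)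
    (hcc : ∀ γ ∈ Ioo (0:ℝ) 1, ∀ x ∈ X,
      -e1 ≤ value P X U f vs ℓ γ x - cγ γ / (1 - γ) ∧
        value P X U f vs ℓ γ x - cγ γ / (1 - γ) ≤ e2 + αV (σ x))
    (c : ℝ) (hcnn : 0 ≤ c) (hcbd : ∀ γ ∈ Ioo (0:ℝ) 1, cγ γ ≤ c)
    -- Assumption 2(ii): detectability
    (W : Euc n → ℝ) (hWnn : ∀ x, 0 ≤ W x) (hWmeas : Measurable W)
    (αWu αWl : ℝ → ℝ) (hαWu : IsKInfty αWu) (hαWl : IsKInfty αWl)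
    (d : ℝ) (hd : 0 < d)
    (hWub : ∀ x ∈ X, W x ≤ αWu (σ x))
    (hdet : ∀ x ∈ X, ∀ u ∈ U,
      (∫ ω, W (f x u (v ω)) ∂P) - W x ≤ -αWl (σ x) + ℓ x u + d)
    -- Assumption 3: `f` and `U_{(0,1)}^η` are locally bounded
    (hflocb : ∀ K1 ⊆ X, ∀ K2 ⊆ U, ∀ K3 ⊆ Vs, IsCompact K1 → IsCompact K2 → IsCompact K3 →
      Bornology.IsBounded {y | ∃ x ∈ K1, ∃ u ∈ K2, ∃ w ∈ K3, y = f x u w})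
    (hUlocb : ∀ D ⊆ X, IsCompact D →
      Bornology.IsBounded (⋃ x ∈ D, ⋃ γ ∈ Ioo (0:ℝ) 1, Ufb P X U f vs v ℓ η γ x))
    -- Assumption 4: continuity
    (hℓcont : Continuous fun p : Euc n × Euc m => ℓ p.1 p.2)
    (hσcont : Continuous σ) (hηcont : Continuous η)
    (hfcont : ∀ w, Continuous fun p : Euc n × Euc m => f p.1 p.2 w)
    (hVequi : ∀ ε > 0, ∀ x : Euc n, ∃ δ > 0, ∀ y : Euc n, ‖x - y‖ < δ →
      ∀ γ ∈ Ioo (0:ℝ) 1, |value P X U f vs ℓ γ x - value P X U f vs ℓ γ y| < ε)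
    (hEVequi : ∀ ε > 0, ∀ p : Euc n × Euc m, ∃ δ > 0, ∀ p' : Euc n × Euc m, ‖p - p'‖ < δ →
      ∀ γ ∈ Ioo (0:ℝ) 1,
        |expValNext P X U f vs v ℓ γ p.1 p.2 - expValNext P X U f vs v ℓ γ p'.1 p'.2| < ε)
    (hWcont : Continuous W)
    :
    ∀ Δ0 > (0:ℝ), ∀ p > (0:ℝ), ∀ T : ℕ, ∃ Δ > (0:ℝ), ∃ ε > (0:ℝ),
      ∀ γ ∈ Ioo (0:ℝ) 1, ∀ x0 ∈ X, σ x0 < Δ0 →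
        ∀ xs : ℕ → Ω → Euc n, IsPertSCSol P X U f vs v ℓ η γ ε x0 xs →
          P {ω | ∀ k ≤ T, σ (xs k ω) < Δ} > ENNReal.ofReal (1 - p) := by

  classical
  intro Δ0 hΔ0 p hp T
  -- a convenient small positive number `p' < p` with `p' ≤ 1/2`
  set p' : ℝ := (min p 1) / 2 with hp'def
  have hp'pos : 0 < p' := by positivity
  have hp'half : p' ≤ 1 / 2 := by
    have : min p 1 ≤ 1 := min_le_right _ _
    simp only [hp'def]; linarith
  -- the law of the noise
  set ν : Measure (Euc q) := P.map v with hνdef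
  have hνprob : IsProbabilityMeasure ν := Measure.isProbabilityMeasure_map hv.aemeasurable
  have hνVs : ν Vs = 1 := by
    have hpre : v ⁻¹' Vs = Set.univ := Set.eq_univ_of_forall hvmem
    rw [hνdef, Measure.map_apply hv hVs, hpre, measure_univ]
  have hδpos : (0:ℝ) < p' / (T + 1) := by positivity
  obtain ⟨K, hKVs, hKcomp, hKlt⟩ := hVs.exists_isCompact_lt_add (μ := ν)
    (measure_ne_top _ _) (ε := ENNReal.ofReal (p' / (T + 1)))
    (ENNReal.ofReal_pos.mpr hδpos).ne'
  have hνKc : ν Kᶜ < ENNReal.ofReal (p' / (T + 1)) := by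
    have h1 : ν Kᶜ = 1 - ν K := prob_compl_eq_one_sub hKcomp.measurableSet
    rw [h1]
    rw [hνVs] at hKlt
    exact ENNReal.sub_lt_of_lt_add prob_le_one (by rw [add_comm] at hKlt; exact hKlt)
  -- the key inductive construction of compact sets containing the trajectory
  have key : ∀ k : ℕ, ∃ C : Set (Euc n), IsCompact C ∧ C ⊆ X ∧
      ∀ γ ∈ Ioo (0:ℝ) 1, ∀ x0 ∈ X, σ x0 < Δ0 →
        ∀ xs : ℕ → Ω → Euc n, IsPertSCSol P X U f vs v ℓ η γ 1 x0 xs →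
          ∀ ω : Ω, (∀ j < k, vs j ω ∈ K) → xs k ω ∈ C := by
    intro k; induction k with
    | zero =>
      refine ⟨{x ∈ X | σ x ≤ Δ0}, ?_, fun x hx => hx.1, ?_⟩
      · apply Metric.isCompact_of_isClosed_isBounded
        · exact hX.inter (isClosed_le hσcont continuous_const)
        · refine (hσru (Icc 0 Δ0) (Metric.isBounded_Icc 0 Δ0)).subset ?_
          exact fun x hx => ⟨hx.1, ⟨hσnn x, hx.2⟩⟩
      · intro γ hγ x0 hx0 hσx0 xs hxs ω _
        rw [hxs.2.1 ω]; exact ⟨hx0, hσx0.le⟩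
    | succ k ih =>
      obtain ⟨C, hCcomp, hCX, hCinv⟩ := ih
      set D : Set (Euc n) := (C + Metric.closedBall (0:Euc n) 1) ∩ X with hDdef
      have hDcomp : IsCompact D := (hCcomp.add (isCompact_closedBall _ _)).inter_right hX
      have hDX : D ⊆ X := inter_subset_right
      obtain ⟨r, hr⟩ := (hUlocb D hDX hDcomp).subset_closedBall 0
      set K2 : Set (Euc m) := U ∩ Metric.closedBall (0:Euc m) (r + 1) with hK2def
      have hK2comp : IsCompact K2 := (isCompact_closedBall _ _).inter_left hU
      obtain ⟨r', hr'⟩ := (hflocb D hDX K2 inter_subset_left K hKVs hDcomp hK2comp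
        hKcomp).subset_closedBall 0
      refine ⟨X ∩ Metric.closedBall 0 (r' + 1), (isCompact_closedBall _ _).inter_left hX,
        inter_subset_left, ?_⟩
      intro γ hγ x0 hx0 hσx0 xs hxs ω hω
      have hxk : xs k ω ∈ C := hCinv γ hγ x0 hx0 hσx0 xs hxs ω
        (fun j hj => hω j (hj.trans (Nat.lt_succ_self k)))
      obtain ⟨u, p1, p2, p3, p4, -, -, -, -, -, hp1, hp2, hp3, hp4, huU, hstep1, hstep2⟩ :=
        hxs.2.2 k
      have hmem2 : xs k ω + p2 ω ∈ D :=
        ⟨add_mem_add hxk (mem_closedBall_zero_iff.mpr (hp2 ω).le), (hstep1 ω).1⟩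
      have hub : u ω - p3 ω ∈ Metric.closedBall (0:Euc m) r := by
        apply hr
        exact Set.mem_biUnion hmem2 (Set.mem_biUnion hγ ((hstep1 ω).2))
      have huK2 : u ω ∈ K2 := by
        refine ⟨huU ω, mem_closedBall_zero_iff.mpr ?_⟩
        have h1 : ‖u ω - p3 ω‖ ≤ r := mem_closedBall_zero_iff.mp hub
        calc ‖u ω‖ = ‖(u ω - p3 ω) + p3 ω‖ := by rw [sub_add_cancel]
          _ ≤ ‖u ω - p3 ω‖ + ‖p3 ω‖ := norm_add_le _ _
          _ ≤ r + 1 := by have := (hp3 ω).le; linarith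
      have hmem1 : xs k ω + p1 ω ∈ D :=
        ⟨add_mem_add hxk (mem_closedBall_zero_iff.mpr (hp1 ω).le), (hstep2 ω).1⟩
      have hf : f (xs k ω + p1 ω) (u ω) (vs k ω) ∈ Metric.closedBall (0:Euc n) r' :=
        hr' ⟨_, hmem1, _, huK2, _, hω k (Nat.lt_succ_self k), rfl⟩
      refine ⟨hxs.1 (k + 1) ω, mem_closedBall_zero_iff.mpr ?_⟩
      rw [(hstep2 ω).2]
      have h1 : ‖f (xs k ω + p1 ω) (u ω) (vs k ω)‖ ≤ r' := mem_closedBall_zero_iff.mp hf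
      calc ‖f (xs k ω + p1 ω) (u ω) (vs k ω) + p4 ω‖
          ≤ ‖f (xs k ω + p1 ω) (u ω) (vs k ω)‖ + ‖p4 ω‖ := norm_add_le _ _
        _ ≤ r' + 1 := by have := (hp4 ω).le; linarith
  choose C hCcomp hCX hCinv using key
  -- bound `σ` on each `C k`
  have hMex : ∀ k : ℕ, ∃ M : ℝ, 0 ≤ M ∧ ∀ x ∈ C k, σ x ≤ M := by
    intro k
    obtain ⟨M, hM⟩ := (hσlocb (C k) (hCX k) (hCcomp k)).subset_closedBall 0
    refine ⟨max M 0, le_max_right _ _, fun x hx => ?_⟩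
    have : ‖σ x‖ ≤ M := mem_closedBall_zero_iff.mp (hM ⟨x, hx, rfl⟩)
    calc σ x ≤ |σ x| := le_abs_self _
      _ = ‖σ x‖ := rfl
      _ ≤ M := this
      _ ≤ max M 0 := le_max_left _ _
  choose M hMnn hM using hMex
  have hne : (Finset.range (T + 1)).Nonempty := ⟨0, Finset.mem_range.mpr (Nat.succ_pos T)⟩
  set Δ : ℝ := 1 + (Finset.range (T + 1)).sup' hne M with hΔdef
  have hΔpos : 0 < Δ := by
    have h0 : M 0 ≤ (Finset.range (T + 1)).sup' hne M :=
      Finset.le_sup' M (Finset.mem_range.mpr (Nat.succ_pos T))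
    have := hMnn 0
    simp only [hΔdef]; linarith
  refine ⟨Δ, hΔpos, 1, one_pos, ?_⟩
  intro γ hγ x0 hx0 hσx0 xs hxs
  set E : Set Ω := ⋂ j ∈ Finset.range T, (vs j) ⁻¹' K with hEdef
  have hEsub : E ⊆ {ω | ∀ k ≤ T, σ (xs k ω) < Δ} := by
    intro ω hω k hk
    have hvK : ∀ j < k, vs j ω ∈ K := by
      intro j hj
      exact Set.mem_iInter₂.mp hω j (Finset.mem_range.mpr (lt_of_lt_of_le hj hk))
    have hx : xs k ω ∈ C k := hCinv k γ hγ x0 hx0 hσx0 xs hxs ω hvK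
    have h1 : σ (xs k ω) ≤ M k := hM k _ hx
    have h2 : M k ≤ (Finset.range (T + 1)).sup' hne M :=
      Finset.le_sup' M (Finset.mem_range.mpr (Nat.lt_succ_of_le hk))
    simp only [hΔdef]; linarith
  have hEmeas : MeasurableSet E :=
    Finset.measurableSet_biInter _ (fun j _ => (hvsmeas j) hKcomp.measurableSet)
  -- bound the probability of the complement of E
  have hcompl : P Eᶜ ≤ ENNReal.ofReal p' := by
    have hEc : Eᶜ = ⋃ j ∈ Finset.range T, (vs j) ⁻¹' Kᶜ := by
      simp [hEdef, Set.compl_iInter, Set.preimage_compl]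
    calc P Eᶜ ≤ ∑ j ∈ Finset.range T, P ((vs j) ⁻¹' Kᶜ) := by
          rw [hEc]; exact measure_biUnion_finset_le _ _
      _ = ∑ j ∈ Finset.range T, ν Kᶜ := by
          refine Finset.sum_congr rfl (fun j _ => ?_)
          rw [← Measure.map_apply (hvsmeas j) hKcomp.measurableSet.compl, hident j]
      _ = (T : ℝ≥0∞) * ν Kᶜ := by rw [Finset.sum_const, Finset.card_range, nsmul_eq_mul]
      _ ≤ (T : ℝ≥0∞) * ENNReal.ofReal (p' / (T + 1)) := by
          exact mul_le_mul_right hνKc.le _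
      _ = ENNReal.ofReal ((T : ℝ) * (p' / (T + 1))) := by
          rw [ENNReal.ofReal_mul (by positivity), ENNReal.ofReal_natCast]
      _ ≤ ENNReal.ofReal p' := by
          apply ENNReal.ofReal_le_ofReal
          rw [mul_div_assoc']
          rw [div_le_iff₀ (by positivity : (0:ℝ) < (T:ℝ) + 1)]
          nlinarith [hp'pos.le]
  have hPE : P E = 1 - P Eᶜ := by
    have h := prob_compl_eq_one_sub (μ := P) hEmeas.compl
    rw [compl_compl] at h
    exact h
  have hlow : ENNReal.ofReal (1 - p') ≤ P E := by
    rw [hPE]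
    have h1 : ENNReal.ofReal (1 - p') = 1 - ENNReal.ofReal p' := by
      rw [ENNReal.ofReal_sub _ hp'pos.le, ENNReal.ofReal_one]
    rw [h1]
    exact tsub_le_tsub_left hcompl 1
  have hstrict : ENNReal.ofReal (1 - p) < ENNReal.ofReal (1 - p') := by
    apply (ENNReal.ofReal_lt_ofReal_iff (by linarith)).mpr
    have hmin : min p 1 ≤ p := min_le_left _ _
    have : 2 * p' = min p 1 := by simp only [hp'def]; ring
    rcases le_or_gt p 1 with h | h
    · have : min p 1 = p := min_eq_left h
      simp only [hp'def, this]; linarith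
    · have : min p 1 = 1 := min_eq_right h.le
      simp only [hp'def, this]; linarith
  calc ENNReal.ofReal (1 - p) < ENNReal.ofReal (1 - p') := hstrict
    _ ≤ P E := hlow
    _ ≤ P {ω | ∀ k ≤ T, σ (xs k ω) < Δ} := measure_mono hEsub
end
end

section
/- Under Assumptions 1 and 2, define Y_γ(x) := V_γ(x) + W(x)/γ − γc_γ/(1−γ) + d + e₁, ᾱ_Y := ᾱ_V + 2ᾱ_W and e := e₁ + e₂. Then for every γ ∈ [1/2, 1) and every x ∈ 𝒳: α_W(σ(x)) ≤ Y_γ(x) ≤ ᾱ_Y(σ(x)) + c + d + e. (Sandwich bounds for the Lyapunov-like function Y_γ.) -/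
open MeasureTheory Set Filter
open scoped ENNReal NNReal

noncomputable section

variable {𝕏 𝕌 𝕍 Ω : Type*}

set_option linter.unusedSectionVars false

section AuxLemmas

open ProbabilityTheory

variable {𝕏 𝕌 𝕍 Ω : Type*} [MeasurableSpace 𝕏] [MeasurableSpace 𝕌] [MeasurableSpace 𝕍]
  [MeasurableSpace Ω]

/-- Deterministic state after `j` steps of the closed loop, as a function of the
initial state and the `j` disturbance values. -/
def dstate (f : 𝕏 → 𝕌 → 𝕍 → 𝕏) (h : 𝕏 → 𝕌) : (j : ℕ) → 𝕏 → (Fin j → 𝕍) → 𝕏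
  | 0, y, _ => y
  | j + 1, y, w =>
      f (dstate f h j y (fun i => w i.castSucc)) (h (dstate f h j y (fun i => w i.castSucc)))
        (w (Fin.last j))

lemma traj_eq_dstate (f : 𝕏 → 𝕌 → 𝕍 → 𝕏) (vs : ℕ → Ω → 𝕍) (h : 𝕏 → 𝕌) (y : 𝕏) :
    ∀ (j : ℕ) (ω : Ω), traj f vs h y j ω = dstate f h j y (fun i : Fin j => vs i ω)
  | 0, ω => rfl
  | j + 1, ω => by
      have IH := traj_eq_dstate f vs h y j ω
      simp only [traj, dstate, IH, Fin.coe_castSucc, Fin.val_last]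

lemma dstate_cons (f : 𝕏 → 𝕌 → 𝕍 → 𝕏) (h : 𝕏 → 𝕌) :
    ∀ (j : ℕ) (y : 𝕏) (w : Fin (j + 1) → 𝕍),
      dstate f h (j + 1) y w = dstate f h j (f y (h y) (w 0)) (fun i => w i.succ)
  | 0, y, w => by
      simp [dstate]
  | j + 1, y, w => by
      have IH := dstate_cons f h j y (fun i => w i.castSucc)
      simp only [dstate] at IH ⊢
      rw [IH]
      simp only [Fin.castSucc_zero, Fin.succ_castSucc, Fin.succ_last]

lemma measurable_dstate {f : 𝕏 → 𝕌 → 𝕍 → 𝕏} {h : 𝕏 → 𝕌}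
    (hf : Measurable fun p : 𝕏 × 𝕌 × 𝕍 => f p.1 p.2.1 p.2.2) (hh : Measurable h) :
    ∀ j : ℕ, Measurable fun p : 𝕏 × (Fin j → 𝕍) => dstate f h j p.1 p.2
  | 0 => measurable_fst
  | j + 1 => by
      have IH := measurable_dstate hf hh j
      have hs : Measurable fun p : 𝕏 × (Fin (j + 1) → 𝕍) =>
          dstate f h j p.1 (fun i => p.2 i.castSucc) :=
        IH.comp (measurable_fst.prodMk (measurable_pi_lambda _ fun i =>
          (measurable_pi_apply _).comp measurable_snd))
      exact hf.comp (hs.prodMk ((hh.comp hs).prodMk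
        ((measurable_pi_apply (Fin.last j)).comp measurable_snd)))

/-- The `j`-th discounted cost term along the deterministic trajectory. -/
def costTerm (f : 𝕏 → 𝕌 → 𝕍 → 𝕏) (h : 𝕏 → 𝕌) (ℓ : 𝕏 → 𝕌 → ℝ) (γ : ℝ) (j : ℕ)
    (y : 𝕏) (w : Fin j → 𝕍) : ℝ≥0∞ :=
  ENNReal.ofReal (γ ^ j * ℓ (dstate f h j y w) (h (dstate f h j y w)))

lemma measurable_costTerm {f : 𝕏 → 𝕌 → 𝕍 → 𝕏} {h : 𝕏 → 𝕌} {ℓ : 𝕏 → 𝕌 → ℝ}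
    (hf : Measurable fun p : 𝕏 × 𝕌 × 𝕍 => f p.1 p.2.1 p.2.2) (hh : Measurable h)
    (hℓ : Measurable fun p : 𝕏 × 𝕌 => ℓ p.1 p.2) (γ : ℝ) (j : ℕ) :
    Measurable fun p : 𝕏 × (Fin j → 𝕍) => costTerm f h ℓ γ j p.1 p.2 := by
  have hd := measurable_dstate hf hh j
  exact ENNReal.measurable_ofReal.comp (measurable_const.mul (hℓ.comp (hd.prodMk (hh.comp hd))))

lemma costTerm_succ {f : 𝕏 → 𝕌 → 𝕍 → 𝕏} {h : 𝕏 → 𝕌} {ℓ : 𝕏 → 𝕌 → ℝ} {γ : ℝ}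
    (hγ : 0 ≤ γ) (j : ℕ) (y : 𝕏) (w : Fin (j + 1) → 𝕍) :
    costTerm f h ℓ γ (j + 1) y w
      = ENNReal.ofReal γ * costTerm f h ℓ γ j (f y (h y) (w 0)) (fun i => w i.succ) := by
  rw [costTerm, costTerm, dstate_cons, ← ENNReal.ofReal_mul hγ]
  congr 1
  ring

lemma cost_eq_tsum {P : Measure Ω} {f : 𝕏 → 𝕌 → 𝕍 → 𝕏} {vs : ℕ → Ω → 𝕍} {ℓ : 𝕏 → 𝕌 → ℝ}
    {γ : ℝ} {h : 𝕏 → 𝕌}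
    (hf : Measurable fun p : 𝕏 × 𝕌 × 𝕍 => f p.1 p.2.1 p.2.2) (hh : Measurable h)
    (hℓ : Measurable fun p : 𝕏 × 𝕌 => ℓ p.1 p.2) (hvs : ∀ k, Measurable (vs k)) (y : 𝕏) :
    cost P f vs ℓ γ y h
      = ∑' j : ℕ, ∫⁻ ω, costTerm f h ℓ γ j y (fun i : Fin j => vs i ω) ∂P := by
  have h1 : cost P f vs ℓ γ y h
      = ∫⁻ ω, ∑' j : ℕ, costTerm f h ℓ γ j y (fun i : Fin j => vs i ω) ∂P := by
    refine lintegral_congr fun ω => tsum_congr fun j => ?_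
    rw [costTerm, traj_eq_dstate]
  rw [h1]
  refine lintegral_tsum fun j => ?_
  exact ((measurable_costTerm hf hh hℓ γ j).comp
    (measurable_const.prodMk (measurable_pi_lambda _ fun i => hvs i))).aemeasurable

lemma indep_head_tail {P : Measure Ω} {vs : ℕ → Ω → 𝕍}
    (hvs : ∀ k, Measurable (vs k))
    (hiid : iIndepFun vs P) (r j : ℕ) :
    IndepFun (vs r) (fun ω (i : Fin j) => vs ((i : ℕ) + (r + 1)) ω) P := by
  classical
  have hST : Disjoint ({r} : Finset ℕ)
      (Finset.image (fun i : Fin j => (i : ℕ) + (r + 1)) Finset.univ) := by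
    rw [Finset.disjoint_left]
    intro a ha hb
    simp only [Finset.mem_singleton] at ha
    subst ha
    simp only [Finset.mem_image, Finset.mem_univ, true_and] at hb
    obtain ⟨i, hi⟩ := hb
    omega
  have h := hiid.indepFun_finset {r}
    (Finset.image (fun i : Fin j => (i : ℕ) + (r + 1)) Finset.univ) hST hvs
  have hφ : Measurable fun w : ({r} : Finset ℕ) → 𝕍 =>
      w ⟨r, Finset.mem_singleton_self r⟩ := measurable_pi_apply _
  have hψ : Measurable fun
      (w : (Finset.image (fun i : Fin j => (i : ℕ) + (r + 1)) Finset.univ : Finset ℕ) → 𝕍) =>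
      (fun i : Fin j => w ⟨(i : ℕ) + (r + 1), by
        simp only [Finset.mem_image, Finset.mem_univ, true_and]; exact ⟨i, rfl⟩⟩) :=
    measurable_pi_lambda _ fun i => measurable_pi_apply _
  exact h.comp hφ hψ

lemma lintegral_factor {P : Measure Ω} [IsProbabilityMeasure P] {vs : ℕ → Ω → 𝕍}
    (hvs : ∀ k, Measurable (vs k))
    (hiid : iIndepFun vs P) (r j : ℕ)
    (Φ : 𝕍 × (Fin j → 𝕍) → ℝ≥0∞) (hΦ : Measurable Φ) :
    ∫⁻ ω, Φ (vs r ω, fun i : Fin j => vs ((i : ℕ) + (r + 1)) ω) ∂P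
      = ∫⁻ a, ∫⁻ ω, Φ (a, fun i : Fin j => vs ((i : ℕ) + (r + 1)) ω) ∂P ∂(P.map (vs r)) := by
  set Y : Ω → (Fin j → 𝕍) := fun ω i => vs ((i : ℕ) + (r + 1)) ω with hY
  have hYm : Measurable Y := measurable_pi_lambda _ fun i => hvs _
  have hindep : IndepFun (vs r) Y P := indep_head_tail hvs hiid r j
  have hmap : P.map (fun ω => (vs r ω, Y ω)) = (P.map (vs r)).prod (P.map Y) :=
    (indepFun_iff_map_prod_eq_prod_map_map (hvs r).aemeasurable hYm.aemeasurable).1 hindep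
  haveI : IsProbabilityMeasure (P.map Y) := Measure.isProbabilityMeasure_map hYm.aemeasurable
  haveI : IsProbabilityMeasure (P.map (vs r)) := Measure.isProbabilityMeasure_map (hvs r).aemeasurable
  calc ∫⁻ ω, Φ (vs r ω, Y ω) ∂P
      = ∫⁻ z, Φ z ∂(P.map fun ω => (vs r ω, Y ω)) :=
        (lintegral_map hΦ ((hvs r).prodMk hYm)).symm
    _ = ∫⁻ z, Φ z ∂((P.map (vs r)).prod (P.map Y)) := by rw [hmap]
    _ = ∫⁻ a, ∫⁻ w, Φ (a, w) ∂(P.map Y) ∂(P.map (vs r)) := lintegral_prod _ hΦ.aemeasurable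
    _ = ∫⁻ a, ∫⁻ ω, Φ (a, Y ω) ∂P ∂(P.map (vs r)) := by
        refine lintegral_congr fun a => ?_
        exact lintegral_map (f := fun w => Φ (a, w)) (hΦ.comp measurable_prodMk_left) hYm

lemma shift_inv {P : Measure Ω} [IsProbabilityMeasure P] {v : Ω → 𝕍} {vs : ℕ → Ω → 𝕍}
    (hvs : ∀ k, Measurable (vs k))
    (hiid : iIndepFun vs P)
    (hident : ∀ k, Measure.map (vs k) P = Measure.map v P) :
    ∀ (j : ℕ) (G : (Fin j → 𝕍) → ℝ≥0∞), Measurable G → ∀ r r' : ℕ,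
      ∫⁻ ω, G (fun i : Fin j => vs ((i : ℕ) + r) ω) ∂P
        = ∫⁻ ω, G (fun i : Fin j => vs ((i : ℕ) + r') ω) ∂P
  | 0, G, hG, r, r' => by
      have h1 : ∀ (s : ℕ) (ω : Ω), (fun i : Fin 0 => vs ((i : ℕ) + s) ω)
          = (fun i : Fin 0 => i.elim0) := fun s ω => funext fun i => i.elim0
      have e : ∀ s : ℕ, ∫⁻ ω, G (fun i : Fin 0 => vs ((i : ℕ) + s) ω) ∂P
          = ∫⁻ ω, G (fun i : Fin 0 => i.elim0) ∂P :=
        fun s => lintegral_congr fun ω => congrArg G (h1 s ω)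
      rw [e r, e r']
  | j + 1, G, hG, r, r' => by
      have hcons : Measurable fun p : 𝕍 × (Fin j → 𝕍) => (Fin.cons p.1 p.2 : Fin (j + 1) → 𝕍) :=
        measurable_pi_lambda _ fun i => Fin.cases measurable_fst
          (fun i' => (measurable_pi_apply i').comp measurable_snd) i
      have hΦ : Measurable fun p : 𝕍 × (Fin j → 𝕍) => G (Fin.cons p.1 p.2) := hG.comp hcons
      have key : ∀ s : ℕ, ∫⁻ ω, G (fun i : Fin (j + 1) => vs ((i : ℕ) + s) ω) ∂P
          = ∫⁻ a, ∫⁻ ω, G (Fin.cons a (fun i : Fin j => vs ((i : ℕ) + (s + 1)) ω)) ∂P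
              ∂(P.map v) := by
        intro s
        have hv1 : ∀ ω : Ω, (fun i : Fin (j + 1) => vs ((i : ℕ) + s) ω)
            = Fin.cons (vs s ω) (fun i : Fin j => vs ((i : ℕ) + (s + 1)) ω) := by
          intro ω
          funext i
          refine Fin.cases ?_ (fun i' => ?_) i
          · simp
          · simp only [Fin.cons_succ, Fin.val_succ]
            congr 1
            omega
        calc ∫⁻ ω, G (fun i : Fin (j + 1) => vs ((i : ℕ) + s) ω) ∂P
            = ∫⁻ ω, G (Fin.cons (vs s ω) (fun i : Fin j => vs ((i : ℕ) + (s + 1)) ω)) ∂P := by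
              exact lintegral_congr fun ω => by rw [hv1 ω]
          _ = ∫⁻ a, ∫⁻ ω, G (Fin.cons a (fun i : Fin j => vs ((i : ℕ) + (s + 1)) ω)) ∂P
                ∂(P.map (vs s)) := lintegral_factor hvs hiid s j _ hΦ
          _ = ∫⁻ a, ∫⁻ ω, G (Fin.cons a (fun i : Fin j => vs ((i : ℕ) + (s + 1)) ω)) ∂P
                ∂(P.map v) := by rw [hident s]
      rw [key r, key r']
      refine lintegral_congr fun a => ?_
      exact shift_inv hvs hiid hident j (fun w => G (Fin.cons a w))
        (hΦ.comp measurable_prodMk_left) (r + 1) (r' + 1)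


set_option maxHeartbeats 1000000 in
lemma cost_ge {P : Measure Ω} [IsProbabilityMeasure P] {X : Set 𝕏} {U : Set 𝕌} {Vs : Set 𝕍}
    (hVs : MeasurableSet Vs) {f : 𝕏 → 𝕌 → 𝕍 → 𝕏}
    (hf : Measurable fun p : 𝕏 × 𝕌 × 𝕍 => f p.1 p.2.1 p.2.2)
    (hfmaps : ∀ x ∈ X, ∀ u ∈ U, ∀ w ∈ Vs, f x u w ∈ X)
    {v : Ω → 𝕍} {vs : ℕ → Ω → 𝕍}
    (hvs : ∀ k, Measurable (vs k)) (hvsmem : ∀ k ω, vs k ω ∈ Vs)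
    (hiid : iIndepFun vs P)
    (hident : ∀ k, Measure.map (vs k) P = Measure.map v P)
    {ℓ : 𝕏 → 𝕌 → ℝ} (hℓ : Measurable fun p : 𝕏 × 𝕌 => ℓ p.1 p.2)
    {γ : ℝ} (hγ0 : 0 ≤ γ) {t : ℝ}
    (ht : ∀ y ∈ X, ENNReal.ofReal t ≤ evalue P X U f vs ℓ γ y)
    {x : 𝕏} (hx : x ∈ X) {h : 𝕏 → 𝕌} (hhm : Measurable h) (hhU : Set.MapsTo h X U) :
    ENNReal.ofReal (ℓ x (h x)) + ENNReal.ofReal γ * ENNReal.ofReal t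
      ≤ cost P f vs ℓ γ x h := by
  classical
  set A : ℕ → 𝕏 → ℝ≥0∞ :=
    fun j y => ∫⁻ ω, costTerm f h ℓ γ j y (fun i : Fin j => vs i ω) ∂P with hA
  -- measurability of `A j`
  have hAmeas : ∀ j, Measurable (A j) := by
    intro j
    have h1 : Measurable fun p : 𝕏 × Ω =>
        costTerm f h ℓ γ j p.1 (fun i : Fin j => vs i p.2) :=
      (measurable_costTerm hf hhm hℓ γ j).comp
        (measurable_fst.prodMk (measurable_pi_lambda _ fun i => (hvs i).comp measurable_snd))
    exact h1.lintegral_prod_right'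
  have hcosteq : ∀ y : 𝕏, cost P f vs ℓ γ y h = ∑' j : ℕ, A j y :=
    fun y => cost_eq_tsum hf hhm hℓ hvs y
  -- head term
  have hhead : A 0 x = ENNReal.ofReal (ℓ x (h x)) := by
    show (∫⁻ ω, costTerm f h ℓ γ 0 x (fun i : Fin 0 => vs i ω) ∂P) = _
    simp [costTerm, dstate]
  -- one-step decomposition of each tail term
  haveI : IsProbabilityMeasure (P.map (vs 0)) := Measure.isProbabilityMeasure_map (hvs 0).aemeasurable
  have hstep : ∀ j : ℕ, A (j + 1) x
      = ∫⁻ a, ENNReal.ofReal γ * A j (f x (h x) a) ∂(P.map (vs 0)) := by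
    intro j
    have hΦ : Measurable fun p : 𝕍 × (Fin j → 𝕍) =>
        ENNReal.ofReal γ * costTerm f h ℓ γ j (f x (h x) p.1) p.2 := by
      have hg : Measurable fun a : 𝕍 => f x (h x) a :=
        hf.comp (measurable_const.prodMk (measurable_const.prodMk measurable_id))
      exact measurable_const.mul ((measurable_costTerm hf hhm hℓ γ j).comp
        ((hg.comp measurable_fst).prodMk measurable_snd))
    have h1 : A (j + 1) x = ∫⁻ ω, ENNReal.ofReal γ *
        costTerm f h ℓ γ j (f x (h x) (vs 0 ω)) (fun i : Fin j => vs ((i : ℕ) + (0 + 1)) ω) ∂P := by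
      refine lintegral_congr fun ω => ?_
      rw [costTerm_succ hγ0]
      simp [Fin.val_succ]
    rw [h1, lintegral_factor hvs hiid 0 j _ hΦ]
    refine lintegral_congr fun a => ?_
    dsimp only
    have hm : Measurable fun ω : Ω =>
        costTerm f h ℓ γ j (f x (h x) a) (fun i : Fin j => vs ((i : ℕ) + (0 + 1)) ω) :=
      (measurable_costTerm hf hhm hℓ γ j).comp
        (measurable_const.prodMk (measurable_pi_lambda _ fun i => hvs _))
    rw [lintegral_const_mul _ hm]
    congr 1
    have h2 := shift_inv hvs hiid hident j (costTerm f h ℓ γ j (f x (h x) a))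
      ((measurable_costTerm hf hhm hℓ γ j).comp measurable_prodMk_left) (0 + 1) 0
    rw [h2, hA]
    simp only [Nat.add_zero]
  -- a.e. the disturbance lands in `Vs`
  have hae : ∀ᵐ a ∂(P.map (vs 0)), a ∈ Vs := by
    rw [ae_iff]
    have hset : {a : 𝕍 | ¬ a ∈ Vs} = Vsᶜ := rfl
    rw [hset, Measure.map_apply (hvs 0) hVs.compl]
    have h0 : vs 0 ⁻¹' Vsᶜ = (∅ : Set Ω) := by
      ext ω; simp [hvsmem 0 ω]
    simp [h0]
  -- bound on the tail
  have htail : ENNReal.ofReal γ * ENNReal.ofReal t ≤ ∑' j : ℕ, A (j + 1) x := by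
    have h1 : ∑' j : ℕ, A (j + 1) x
        = ∫⁻ a, ∑' j : ℕ, ENNReal.ofReal γ * A j (f x (h x) a) ∂(P.map (vs 0)) := by
      rw [tsum_congr hstep]
      refine (lintegral_tsum fun j => ?_).symm
      have hg : Measurable fun a : 𝕍 => f x (h x) a :=
        hf.comp (measurable_const.prodMk (measurable_const.prodMk measurable_id))
      exact (measurable_const.mul ((hAmeas j).comp hg)).aemeasurable
    have h2 : ∀ a : 𝕍, a ∈ Vs → ENNReal.ofReal γ * ENNReal.ofReal t
        ≤ ∑' j : ℕ, ENNReal.ofReal γ * A j (f x (h x) a) := by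
      intro a ha
      have hmem : f x (h x) a ∈ X := hfmaps x hx (h x) (hhU hx) a ha
      have hv : ENNReal.ofReal t ≤ evalue P X U f vs ℓ γ (f x (h x) a) := ht _ hmem
      have hVc : evalue P X U f vs ℓ γ (f x (h x) a) ≤ cost P f vs ℓ γ (f x (h x) a) h :=
        iInf_le (fun h' : {h' : 𝕏 → 𝕌 // Measurable h' ∧ Set.MapsTo h' X U} =>
          cost P f vs ℓ γ (f x (h x) a) h'.1) ⟨h, hhm, hhU⟩
      calc ENNReal.ofReal γ * ENNReal.ofReal t
          ≤ ENNReal.ofReal γ * cost P f vs ℓ γ (f x (h x) a) h :=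
            mul_le_mul_right (hv.trans hVc) _
        _ = ∑' j : ℕ, ENNReal.ofReal γ * A j (f x (h x) a) := by
            rw [hcosteq, ENNReal.tsum_mul_left]
    calc ENNReal.ofReal γ * ENNReal.ofReal t
        = ∫⁻ _, ENNReal.ofReal γ * ENNReal.ofReal t ∂(P.map (vs 0)) := by
          rw [lintegral_const, measure_univ, mul_one]
      _ ≤ ∫⁻ a, ∑' j : ℕ, ENNReal.ofReal γ * A j (f x (h x) a) ∂(P.map (vs 0)) := by
          refine lintegral_mono_ae ?_
          filter_upwards [hae] with a ha using h2 a ha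
      _ = ∑' j : ℕ, A (j + 1) x := h1.symm
  -- put things together
  calc ENNReal.ofReal (ℓ x (h x)) + ENNReal.ofReal γ * ENNReal.ofReal t
      ≤ A 0 x + ∑' j : ℕ, A (j + 1) x := by
        rw [hhead]
        exact add_le_add (le_refl _) htail
    _ = ∑' j : ℕ, A j x := (tsum_eq_zero_add' (f := fun j : ℕ => A j x) ENNReal.summable).symm
    _ = cost P f vs ℓ γ x h := (hcosteq x).symm

end AuxLemmas

theorem lyapunov_sandwich_bounds
    (n m q : ℕ) (Ω : Type) [MeasurableSpace Ω] (P : Measure Ω) [IsProbabilityMeasure P]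
    (X : Set (Euc n)) (U : Set (Euc m)) (Vs : Set (Euc q))
    (hX : IsClosed X) (hU : IsClosed U) (hVs : MeasurableSet Vs)
    (f : Euc n → Euc m → Euc q → Euc n)
    (hfmaps : ∀ x ∈ X, ∀ u ∈ U, ∀ w ∈ Vs, f x u w ∈ X)
    (v : Ω → Euc q) (vs : ℕ → Ω → Euc q)
    (hv : Measurable v) (hvmem : ∀ ω, v ω ∈ Vs)
    (hvsmeas : ∀ k, Measurable (vs k)) (hvsmem : ∀ k ω, vs k ω ∈ Vs)
    (hiid : ProbabilityTheory.iIndepFun vs P)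
    (hident : ∀ k, Measure.map (vs k) P = Measure.map v P)
    (ℓ : Euc n → Euc m → ℝ) (hℓnn : ∀ x u, 0 ≤ ℓ x u)
    (η : Euc n → ℝ) (hηnn : ∀ x, 0 ≤ η x)
    -- Assumption 1 (measurability; `V_γ` finite and measurable)
    (hfmeas : Measurable fun p : Euc n × Euc m × Euc q => f p.1 p.2.1 p.2.2)
    (hℓmeas : Measurable fun p : Euc n × Euc m => ℓ p.1 p.2)
    (hηmeas : Measurable η)
    (hVfin : ∀ γ ∈ Ioo (0:ℝ) 1, ∀ x ∈ X, evalue P X U f vs ℓ γ x ≠ ⊤)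
    (hVmeas : ∀ γ ∈ Ioo (0:ℝ) 1, Measurable (value P X U f vs ℓ γ))
    -- state-space measure `σ`
    (σ : Euc n → ℝ) (hσnn : ∀ x, 0 ≤ σ x) (hσmeas : Measurable σ)
    (hσlocb : ∀ K ⊆ X, IsCompact K → Bornology.IsBounded (σ '' K))
    (hσru : ∀ B : Set ℝ, Bornology.IsBounded B → Bornology.IsBounded {x ∈ X | σ x ∈ B})
    -- Assumption 2(i): cost-controllability with lower bound
    (αV : ℝ → ℝ) (hαV : IsKInfty αV)
    (e1 e2 : ℝ) (he1 : 0 ≤ e1) (he2 : 0 ≤ e2)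
    (cγ : ℝ → ℝ) (hcγnn : ∀ γ ∈ Ioo (0:ℝ) 1, 0 ≤ cγ γ)
    (hcc : ∀ γ ∈ Ioo (0:ℝ) 1, ∀ x ∈ X,
      -e1 ≤ value P X U f vs ℓ γ x - cγ γ / (1 - γ) ∧
        value P X U f vs ℓ γ x - cγ γ / (1 - γ) ≤ e2 + αV (σ x))
    (c : ℝ) (hcnn : 0 ≤ c) (hcbd : ∀ γ ∈ Ioo (0:ℝ) 1, cγ γ ≤ c)
    -- Assumption 2(ii): detectability
    (W : Euc n → ℝ) (hWnn : ∀ x, 0 ≤ W x) (hWmeas : Measurable W)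
    (αWu αWl : ℝ → ℝ) (hαWu : IsKInfty αWu) (hαWl : IsKInfty αWl)
    (d : ℝ) (hd : 0 < d)
    (hWub : ∀ x ∈ X, W x ≤ αWu (σ x))
    (hdet : ∀ x ∈ X, ∀ u ∈ U,
      (∫ ω, W (f x u (v ω)) ∂P) - W x ≤ -αWl (σ x) + ℓ x u + d)
    :
    ∀ γ ∈ Ico (1/2 : ℝ) 1, ∀ x ∈ X,
      αWl (σ x) ≤
          value P X U f vs ℓ γ x + W x / γ - γ * cγ γ / (1 - γ) + d + e1 ∧
        value P X U f vs ℓ γ x + W x / γ - γ * cγ γ / (1 - γ) + d + e1 ≤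
          (αV (σ x) + 2 * αWu (σ x)) + c + d + (e1 + e2) := by
  intro γ hγ x hx
  have hγ0 : (0:ℝ) < γ := lt_of_lt_of_le (by norm_num) hγ.1
  have hγ1 : γ < 1 := hγ.2
  have hγIoo : γ ∈ Ioo (0:ℝ) 1 := ⟨hγ0, hγ1⟩
  have h1γ : (0:ℝ) < 1 - γ := by linarith
  have h1γne : (1:ℝ) - γ ≠ 0 := ne_of_gt h1γ
  obtain ⟨hlow, hupp⟩ := hcc γ hγIoo x hx
  constructor
  · -- lower bound
    set t : ℝ := cγ γ / (1 - γ) - e1 with htdef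
    have ht : ∀ y ∈ X, ENNReal.ofReal t ≤ evalue P X U f vs ℓ γ y := by
      intro y hy
      have h1 := (hcc γ hγIoo y hy).1
      have h2 : t ≤ value P X U f vs ℓ γ y := by rw [htdef]; linarith
      calc ENNReal.ofReal t ≤ ENNReal.ofReal (value P X U f vs ℓ γ y) :=
            ENNReal.ofReal_le_ofReal h2
        _ = evalue P X U f vs ℓ γ y := ENNReal.ofReal_toReal (hVfin γ hγIoo y hy)
    have key : ∀ ε : ℝ, 0 < ε →
        αWl (σ x) ≤ (value P X U f vs ℓ γ x + W x - γ * t + d) + ε := by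
      intro ε hε
      have hne := hVfin γ hγIoo x hx
      have hlt : evalue P X U f vs ℓ γ x
          < evalue P X U f vs ℓ γ x + ENNReal.ofReal ε :=
        ENNReal.lt_add_right hne (ENNReal.ofReal_pos.mpr hε).ne'
      obtain ⟨⟨h0, hh0m, hh0U⟩, hcostlt⟩ := iInf_lt_iff.mp
        (show (⨅ h : {h : Euc n → Euc m // Measurable h ∧ MapsTo h X U},
          cost P f vs ℓ γ x h.1) < evalue P X U f vs ℓ γ x + ENNReal.ofReal ε from hlt)
      have hge := cost_ge hVs hfmeas hfmaps hvsmeas hvsmem hiid hident hℓmeas hγ0.le ht hx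
        hh0m hh0U
      have hv0 : (0:ℝ) ≤ value P X U f vs ℓ γ x := ENNReal.toReal_nonneg
      have hchain : ENNReal.ofReal (ℓ x (h0 x) + γ * t)
          ≤ ENNReal.ofReal (value P X U f vs ℓ γ x + ε) := by
        calc ENNReal.ofReal (ℓ x (h0 x) + γ * t)
            ≤ ENNReal.ofReal (ℓ x (h0 x)) + ENNReal.ofReal (γ * t) := ENNReal.ofReal_add_le
          _ = ENNReal.ofReal (ℓ x (h0 x)) + ENNReal.ofReal γ * ENNReal.ofReal t := by
              rw [ENNReal.ofReal_mul hγ0.le]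
          _ ≤ cost P f vs ℓ γ x h0 := hge
          _ ≤ evalue P X U f vs ℓ γ x + ENNReal.ofReal ε := hcostlt.le
          _ = ENNReal.ofReal (value P X U f vs ℓ γ x) + ENNReal.ofReal ε := by
              congr 1
              exact (ENNReal.ofReal_toReal hne).symm
          _ = ENNReal.ofReal (value P X U f vs ℓ γ x + ε) :=
              (ENNReal.ofReal_add hv0 hε.le).symm
      have hineq : ℓ x (h0 x) + γ * t ≤ value P X U f vs ℓ γ x + ε :=
        (ENNReal.ofReal_le_ofReal_iff (by linarith)).mp hchain
      have hu : h0 x ∈ U := hh0U hx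
      have hdet' := hdet x hx (h0 x) hu
      have hint : 0 ≤ ∫ ω, W (f x (h0 x) (v ω)) ∂P := integral_nonneg fun ω => hWnn _
      linarith
    have hfin : αWl (σ x) ≤ value P X U f vs ℓ γ x + W x - γ * t + d :=
      le_of_forall_pos_le_add key
    have hWγ : W x ≤ W x / γ := by
      rw [le_div_iff₀ hγ0]; nlinarith [hWnn x]
    have hts : γ * t = γ * cγ γ / (1 - γ) - γ * e1 := by rw [htdef]; ring
    have hγe1 : γ * e1 ≤ e1 := by nlinarith
    rw [hts] at hfin
    linarith
  · -- upper bound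
    have hW2 : W x / γ ≤ 2 * αWu (σ x) := by
      have h2 : W x / γ ≤ 2 * W x := by
        rw [div_le_iff₀ hγ0]; nlinarith [hWnn x, hγ.1]
      have h3 := hWub x hx
      linarith
    have hc3 : cγ γ / (1 - γ) - γ * cγ γ / (1 - γ) = cγ γ := by
      field_simp
    have hc4 := hcbd γ hγIoo
    linarith
end
end

section
/- One-step decrease of the Lyapunov-like function: Let Assumptions 1 and 2 hold, let γ ∈ [1/2, 1), Δ > 0 and δ > 0, and define Y_γ(x) := V_γ(x) + W(x)/γ − γc_γ/(1−γ) + d + e₁ and A_{γ,δ} := {x ∈ 𝒳 : α_W(σ(x)) ≤ c_γ + d + η(x) + δ}. Let (x, u) : Ω → 𝒳 × 𝒰 be a random pair such that v is independent of σ(x, u), and such that almost surely u ∈ U_γ^η(x), σ(x) < Δ, and x ∉ A_{γ,δ}. Assume Y_γ(x) and Y_γ(f(x,u,v)) are integrable. Then E[Y_γ(f(x, u, v))] − E[Y_γ(x)] ≤ γ^{-1}((1−γ)(ᾱ_V(Δ) + e₂) − δ). -/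
open MeasureTheory Set Filter
open scoped ENNReal NNReal

noncomputable section

variable {𝕏 𝕌 𝕍 Ω : Type*}

/-- Abstract one-step decrease lemma: all the measure-theoretic and arithmetic work. -/
lemma aux_one_step
    {XS US VS Ω : Type*} [MeasurableSpace XS] [MeasurableSpace US] [MeasurableSpace VS]
    [MeasurableSpace Ω] (P : Measure Ω) [IsProbabilityMeasure P]
    (f : XS → US → VS → XS) (V W η' aW : XS → ℝ) (L : XS → US → ℝ) (Y : XS → ℝ)
    (v : Ω → VS) (hv : Measurable v)
    (hfmeas : Measurable fun p : XS × US × VS => f p.1 p.2.1 p.2.2)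
    (hVm : Measurable V) (hWm : Measurable W)
    (hLm : Measurable fun p : XS × US => L p.1 p.2)
    (hηm : Measurable η') (haWm : Measurable aW)
    (hVnn : ∀ x, 0 ≤ V x) (hWnn : ∀ x, 0 ≤ W x)
    (γ cg d K Db δ : ℝ) (hγ0 : 0 < γ) (hγ1 : γ < 1)
    (hYeq : ∀ x, Y x = V x + W x / γ + K)
    (xr : Ω → XS) (ur : Ω → US) (hxr : Measurable xr) (hur : Measurable ur)
    (hindep : ProbabilityTheory.IndepFun v (fun ω => (xr ω, ur ω)) P)
    (hgood : ∀ᵐ ω ∂P,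
      L (xr ω) (ur ω) + γ * ∫ ω', V (f (xr ω) (ur ω) (v ω')) ∂P ≤ V (xr ω) + η' (xr ω) ∧
      (∫ ω', W (f (xr ω) (ur ω) (v ω')) ∂P) - W (xr ω) ≤ -aW (xr ω) + L (xr ω) (ur ω) + d ∧
      (1 - γ) * V (xr ω) ≤ cg + (1 - γ) * Db ∧
      cg + d + η' (xr ω) + δ < aW (xr ω))
    (hint1 : Integrable (fun ω => Y (xr ω)) P)
    (hint2 : Integrable (fun ω => Y (f (xr ω) (ur ω) (v ω))) P) :
    (∫ ω, Y (f (xr ω) (ur ω) (v ω)) ∂P) - (∫ ω, Y (xr ω) ∂P)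
      ≤ γ⁻¹ * ((1 - γ) * Db - δ) := by
  have hγne : γ ≠ 0 := hγ0.ne'
  have h1γ : (0:ℝ) < 1 - γ := by linarith
  set μ := Measure.map (fun ω => (xr ω, ur ω)) P with hμ
  set ν := Measure.map v P with hν
  have hpm : Measurable fun ω => (xr ω, ur ω) := hxr.prodMk hur
  haveI hμP : IsProbabilityMeasure μ := Measure.isProbabilityMeasure_map hpm.aemeasurable
  haveI hνP : IsProbabilityMeasure ν := Measure.isProbabilityMeasure_map hv.aemeasurable
  have hYm : Measurable Y := by
    have hE : Y = fun x => V x + W x / γ + K := funext hYeq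
    rw [hE]
    exact (hVm.add (hWm.div_const γ)).add measurable_const
  have hfm2 : Measurable fun z : (XS × US) × VS => f z.1.1 z.1.2 z.2 :=
    hfmeas.comp ((measurable_fst.fst).prodMk ((measurable_fst.snd).prodMk measurable_snd))
  have hfm3 : ∀ (x : XS) (u : US), Measurable fun w : VS => f x u w := fun x u =>
    hfmeas.comp (measurable_const.prodMk (measurable_const.prodMk measurable_id))
  have hFm : Measurable fun z : (XS × US) × VS => Y (f z.1.1 z.1.2 z.2) := hYm.comp hfm2
  have hT : Measurable fun ω => ((xr ω, ur ω), v ω) := hpm.prodMk hv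
  have hprod : Measure.map (fun ω => ((xr ω, ur ω), v ω)) P = μ.prod ν :=
    (ProbabilityTheory.indepFun_iff_map_prod_eq_prod_map_map hpm.aemeasurable
      hv.aemeasurable).mp hindep.symm
  have hFint : Integrable (fun z : (XS × US) × VS => Y (f z.1.1 z.1.2 z.2)) (μ.prod ν) := by
    rw [← hprod, integrable_map_measure hFm.aestronglyMeasurable hT.aemeasurable]
    exact hint2
  have hinner : ∀ p : XS × US,
      (∫ w, Y (f p.1 p.2 w) ∂ν) = ∫ ω, Y (f p.1 p.2 (v ω)) ∂P := by
    intro p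
    rw [hν]
    exact integral_map hv.aemeasurable
      ((hYm.comp (hfm3 p.1 p.2)).aestronglyMeasurable)
  have hEq1 : (∫ ω, Y (f (xr ω) (ur ω) (v ω)) ∂P)
      = ∫ p : XS × US, ∫ ω, Y (f p.1 p.2 (v ω)) ∂P ∂μ := by
    have h1 : (∫ ω, Y (f (xr ω) (ur ω) (v ω)) ∂P)
        = ∫ z : (XS × US) × VS, Y (f z.1.1 z.1.2 z.2) ∂(μ.prod ν) := by
      rw [← hprod, integral_map hT.aemeasurable hFm.aestronglyMeasurable]
    rw [h1, integral_prod _ hFint]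
    exact integral_congr_ae (Eventually.of_forall fun p => hinner p)
  have hY1m : Measurable fun p : XS × US => Y p.1 := hYm.comp measurable_fst
  have hEq2 : (∫ ω, Y (xr ω) ∂P) = ∫ p : XS × US, Y p.1 ∂μ := by
    rw [hμ, integral_map hpm.aemeasurable hY1m.aestronglyMeasurable]
  have hY1int : Integrable (fun p : XS × US => Y p.1) μ := by
    rw [hμ, integrable_map_measure hY1m.aestronglyMeasurable hpm.aemeasurable]
    exact hint1
  have hgint : Integrable (fun p : XS × US => ∫ ω, Y (f p.1 p.2 (v ω)) ∂P) μ :=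
    hFint.integral_prod_left.congr (Eventually.of_forall fun p => hinner p)
  have hIae : ∀ᵐ p : XS × US ∂μ, Integrable (fun ω => Y (f p.1 p.2 (v ω))) P := by
    filter_upwards [hFint.prod_right_ae] with p hp
    rw [hν] at hp
    exact (integrable_map_measure ((hYm.comp (hfm3 p.1 p.2)).aestronglyMeasurable)
      hv.aemeasurable).mp hp
  have hIVm : Measurable fun p : XS × US => ∫ ω, V (f p.1 p.2 (v ω)) ∂P := by
    have h : Measurable fun z : (XS × US) × Ω => V (f z.1.1 z.1.2 (v z.2)) :=
      hVm.comp (hfmeas.comp ((measurable_fst.fst).prodMk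
        ((measurable_fst.snd).prodMk (hv.comp measurable_snd))))
    exact h.stronglyMeasurable.integral_prod_right'.measurable
  have hIWm : Measurable fun p : XS × US => ∫ ω, W (f p.1 p.2 (v ω)) ∂P := by
    have h : Measurable fun z : (XS × US) × Ω => W (f z.1.1 z.1.2 (v z.2)) :=
      hWm.comp (hfmeas.comp ((measurable_fst.fst).prodMk
        ((measurable_fst.snd).prodMk (hv.comp measurable_snd))))
    exact h.stronglyMeasurable.integral_prod_right'.measurable
  have hGm : MeasurableSet {p : XS × US |
      L p.1 p.2 + γ * ∫ ω, V (f p.1 p.2 (v ω)) ∂P ≤ V p.1 + η' p.1 ∧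
      (∫ ω, W (f p.1 p.2 (v ω)) ∂P) - W p.1 ≤ -aW p.1 + L p.1 p.2 + d ∧
      (1 - γ) * V p.1 ≤ cg + (1 - γ) * Db ∧
      cg + d + η' p.1 + δ < aW p.1} := by
    have m1 : MeasurableSet {p : XS × US |
        L p.1 p.2 + γ * ∫ ω, V (f p.1 p.2 (v ω)) ∂P ≤ V p.1 + η' p.1} :=
      measurableSet_le (hLm.add (hIVm.const_mul γ))
        ((hVm.comp measurable_fst).add (hηm.comp measurable_fst))
    have m2 : MeasurableSet {p : XS × US |
        (∫ ω, W (f p.1 p.2 (v ω)) ∂P) - W p.1 ≤ -aW p.1 + L p.1 p.2 + d} :=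
      measurableSet_le (hIWm.sub (hWm.comp measurable_fst))
        (((haWm.comp measurable_fst).neg.add hLm).add measurable_const)
    have m3 : MeasurableSet {p : XS × US | (1 - γ) * V p.1 ≤ cg + (1 - γ) * Db} :=
      measurableSet_le ((hVm.comp measurable_fst).const_mul (1 - γ)) measurable_const
    have m4 : MeasurableSet {p : XS × US | cg + d + η' p.1 + δ < aW p.1} :=
      measurableSet_lt ((measurable_const.add (hηm.comp measurable_fst)).add
        measurable_const) (haWm.comp measurable_fst)
    exact m1.inter (m2.inter (m3.inter m4))
  have hgood' : ∀ᵐ p : XS × US ∂μ,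
      L p.1 p.2 + γ * ∫ ω, V (f p.1 p.2 (v ω)) ∂P ≤ V p.1 + η' p.1 ∧
      (∫ ω, W (f p.1 p.2 (v ω)) ∂P) - W p.1 ≤ -aW p.1 + L p.1 p.2 + d ∧
      (1 - γ) * V p.1 ≤ cg + (1 - γ) * Db ∧
      cg + d + η' p.1 + δ < aW p.1 := by
    rw [hμ, ae_map_iff hpm.aemeasurable hGm]
    exact hgood
  have key : ∀ p : XS × US,
      (L p.1 p.2 + γ * ∫ ω, V (f p.1 p.2 (v ω)) ∂P ≤ V p.1 + η' p.1 ∧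
       (∫ ω, W (f p.1 p.2 (v ω)) ∂P) - W p.1 ≤ -aW p.1 + L p.1 p.2 + d ∧
       (1 - γ) * V p.1 ≤ cg + (1 - γ) * Db ∧
       cg + d + η' p.1 + δ < aW p.1) →
      Integrable (fun ω => Y (f p.1 p.2 (v ω))) P →
      (∫ ω, Y (f p.1 p.2 (v ω)) ∂P) ≤ Y p.1 + γ⁻¹ * ((1 - γ) * Db - δ) := by
    rintro ⟨x, u⟩ ⟨hub, hdt, hvx, hne⟩ hYint
    have hg1m : Measurable fun ω => V (f x u (v ω)) := hVm.comp ((hfm3 x u).comp hv)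
    have hg2m : Measurable fun ω => W (f x u (v ω)) := hWm.comp ((hfm3 x u).comp hv)
    have hsum : Integrable (fun ω => V (f x u (v ω)) + W (f x u (v ω)) / γ) P := by
      have h := hYint.sub (integrable_const K)
      exact h.congr (Eventually.of_forall fun ω => by
        show Y (f x u (v ω)) - K = _
        rw [hYeq]; ring)
    have hg1int : Integrable (fun ω => V (f x u (v ω))) P := by
      refine hsum.mono' hg1m.aestronglyMeasurable (Eventually.of_forall fun ω => ?_)
      rw [Real.norm_eq_abs, abs_of_nonneg (hVnn _)]
      have := div_nonneg (hWnn (f x u (v ω))) hγ0.le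
      linarith
    have hg2int : Integrable (fun ω => W (f x u (v ω))) P := by
      refine hsum.mono' hg2m.aestronglyMeasurable (Eventually.of_forall fun ω => ?_)
      rw [Real.norm_eq_abs, abs_of_nonneg (hWnn _)]
      have h1 := hVnn (f x u (v ω))
      have h2 := hWnn (f x u (v ω))
      have h3 : W (f x u (v ω)) ≤ W (f x u (v ω)) / γ := by
        rw [le_div_iff₀ hγ0]; nlinarith
      linarith
    have hsplit : (∫ ω, Y (f x u (v ω)) ∂P)
        = (∫ ω, V (f x u (v ω)) ∂P) + (∫ ω, W (f x u (v ω)) ∂P) / γ + K := by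
      have h : (fun ω => Y (f x u (v ω)))
          = fun ω => (V (f x u (v ω)) + W (f x u (v ω)) / γ) + K :=
        funext fun ω => by rw [hYeq]
      rw [h, integral_add hsum (integrable_const K),
        integral_add hg1int (hg2int.div_const γ), integral_div, integral_const,
        probReal_univ, one_smul]
    rw [hsplit, hYeq]
    set IV := ∫ ω, V (f x u (v ω)) ∂P with hIV
    set IW := ∫ ω, W (f x u (v ω)) ∂P with hIW
    have H : γ * IV + IW ≤ γ * V x + W x + (1 - γ) * Db - δ := by nlinarith [hub, hdt, hvx, hne]
    have hkey : V x + W x / γ + K + γ⁻¹ * ((1 - γ) * Db - δ) - (IV + IW / γ + K)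
        = γ⁻¹ * ((γ * V x + W x + (1 - γ) * Db - δ) - (γ * IV + IW)) := by
      field_simp
      ring
    have hpos := mul_nonneg (inv_nonneg.mpr hγ0.le) (sub_nonneg.mpr H)
    linarith
  have hmono : (∫ p : XS × US, ∫ ω, Y (f p.1 p.2 (v ω)) ∂P ∂μ)
      ≤ ∫ p : XS × US, (Y p.1 + γ⁻¹ * ((1 - γ) * Db - δ)) ∂μ := by
    refine integral_mono_ae hgint (hY1int.add (integrable_const _)) ?_
    filter_upwards [hgood', hIae] with p hp hip
    exact key p hp hip
  have hconst : (∫ p : XS × US, (Y p.1 + γ⁻¹ * ((1 - γ) * Db - δ)) ∂μ)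
      = (∫ p : XS × US, Y p.1 ∂μ) + γ⁻¹ * ((1 - γ) * Db - δ) := by
    rw [integral_add hY1int (integrable_const _), integral_const, probReal_univ,
      one_smul]
  rw [hEq1, hEq2]
  linarith

theorem one_step_decrease_of_lyapunov_function
    (n m q : ℕ) (Ω : Type) [MeasurableSpace Ω] (P : Measure Ω) [IsProbabilityMeasure P]
    (X : Set (Euc n)) (U : Set (Euc m)) (Vs : Set (Euc q))
    (hX : IsClosed X) (hU : IsClosed U) (hVs : MeasurableSet Vs)
    (f : Euc n → Euc m → Euc q → Euc n)
    (hfmaps : ∀ x ∈ X, ∀ u ∈ U, ∀ w ∈ Vs, f x u w ∈ X)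
    (v : Ω → Euc q) (vs : ℕ → Ω → Euc q)
    (hv : Measurable v) (hvmem : ∀ ω, v ω ∈ Vs)
    (hvsmeas : ∀ k, Measurable (vs k)) (hvsmem : ∀ k ω, vs k ω ∈ Vs)
    (hiid : ProbabilityTheory.iIndepFun vs P)
    (hident : ∀ k, Measure.map (vs k) P = Measure.map v P)
    (ℓ : Euc n → Euc m → ℝ) (hℓnn : ∀ x u, 0 ≤ ℓ x u)
    (η : Euc n → ℝ) (hηnn : ∀ x, 0 ≤ η x)
    -- Assumption 1 (measurability; `V_γ` finite and measurable)
    (hfmeas : Measurable fun p : Euc n × Euc m × Euc q => f p.1 p.2.1 p.2.2)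
    (hℓmeas : Measurable fun p : Euc n × Euc m => ℓ p.1 p.2)
    (hηmeas : Measurable η)
    (hVfin : ∀ γ ∈ Ioo (0:ℝ) 1, ∀ x ∈ X, evalue P X U f vs ℓ γ x ≠ ⊤)
    (hVmeas : ∀ γ ∈ Ioo (0:ℝ) 1, Measurable (value P X U f vs ℓ γ))
    -- state-space measure `σ`
    (σ : Euc n → ℝ) (hσnn : ∀ x, 0 ≤ σ x) (hσmeas : Measurable σ)
    (hσlocb : ∀ K ⊆ X, IsCompact K → Bornology.IsBounded (σ '' K))
    (hσru : ∀ B : Set ℝ, Bornology.IsBounded B → Bornology.IsBounded {x ∈ X | σ x ∈ B})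
    -- Assumption 2(i): cost-controllability with lower bound
    (αV : ℝ → ℝ) (hαV : IsKInfty αV)
    (e1 e2 : ℝ) (he1 : 0 ≤ e1) (he2 : 0 ≤ e2)
    (cγ : ℝ → ℝ) (hcγnn : ∀ γ ∈ Ioo (0:ℝ) 1, 0 ≤ cγ γ)
    (hcc : ∀ γ ∈ Ioo (0:ℝ) 1, ∀ x ∈ X,
      -e1 ≤ value P X U f vs ℓ γ x - cγ γ / (1 - γ) ∧
        value P X U f vs ℓ γ x - cγ γ / (1 - γ) ≤ e2 + αV (σ x))
    (c : ℝ) (hcnn : 0 ≤ c) (hcbd : ∀ γ ∈ Ioo (0:ℝ) 1, cγ γ ≤ c)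
    -- Assumption 2(ii): detectability
    (W : Euc n → ℝ) (hWnn : ∀ x, 0 ≤ W x) (hWmeas : Measurable W)
    (αWu αWl : ℝ → ℝ) (hαWu : IsKInfty αWu) (hαWl : IsKInfty αWl)
    (d : ℝ) (hd : 0 < d)
    (hWub : ∀ x ∈ X, W x ≤ αWu (σ x))
    (hdet : ∀ x ∈ X, ∀ u ∈ U,
      (∫ ω, W (f x u (v ω)) ∂P) - W x ≤ -αWl (σ x) + ℓ x u + d)
    (γ : ℝ) (hγ : γ ∈ Ico (1/2 : ℝ) 1) (Δ δ : ℝ) (hΔ : 0 < Δ) (hδ : 0 < δ)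
    (xr : Ω → Euc n) (ur : Ω → Euc m) (hxr : Measurable xr) (hur : Measurable ur)
    (hindep : ProbabilityTheory.IndepFun v (fun ω => (xr ω, ur ω)) P)
    (has : ∀ᵐ ω ∂P, xr ω ∈ X ∧ ur ω ∈ Ufb P X U f vs v ℓ η γ (xr ω) ∧ σ (xr ω) < Δ ∧
      ¬ αWl (σ (xr ω)) ≤ cγ γ + d + η (xr ω) + δ)
    (hint1 : Integrable (fun ω =>
      value P X U f vs ℓ γ (xr ω) + W (xr ω) / γ - γ * cγ γ / (1 - γ) + d + e1) P)
    (hint2 : Integrable (fun ω =>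
      value P X U f vs ℓ γ (f (xr ω) (ur ω) (v ω)) + W (f (xr ω) (ur ω) (v ω)) / γ -
        γ * cγ γ / (1 - γ) + d + e1) P)
    :
    (∫ ω, (value P X U f vs ℓ γ (f (xr ω) (ur ω) (v ω)) +
          W (f (xr ω) (ur ω) (v ω)) / γ - γ * cγ γ / (1 - γ) + d + e1) ∂P) -
        ∫ ω, (value P X U f vs ℓ γ (xr ω) + W (xr ω) / γ - γ * cγ γ / (1 - γ) + d + e1) ∂P ≤
      γ⁻¹ * ((1 - γ) * (αV Δ + e2) - δ) := by
  have hγ0 : (0:ℝ) < γ := lt_of_lt_of_le (by norm_num) hγ.1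
  have hγ1 : γ < 1 := hγ.2
  have hγIoo : γ ∈ Ioo (0:ℝ) 1 := ⟨hγ0, hγ1⟩
  have h1γ : (0:ℝ) < 1 - γ := by linarith
  have hVm : Measurable (value P X U f vs ℓ γ) := hVmeas γ hγIoo
  have haWm : Measurable fun x : Euc n => αWl (σ x) := by
    have hc : Continuous ((Ici (0:ℝ)).restrict αWl) :=
      continuousOn_iff_continuous_restrict.mp hαWl.1
    have h2 : Measurable fun x : Euc n => (⟨σ x, hσnn x⟩ : Ici (0:ℝ)) := hσmeas.subtype_mk
    exact hc.measurable.comp h2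
  have hgood : ∀ᵐ ω ∂P,
      ℓ (xr ω) (ur ω) + γ * ∫ ω', value P X U f vs ℓ γ (f (xr ω) (ur ω) (v ω')) ∂P ≤
        value P X U f vs ℓ γ (xr ω) + η (xr ω) ∧
      (∫ ω', W (f (xr ω) (ur ω) (v ω')) ∂P) - W (xr ω) ≤
        -αWl (σ (xr ω)) + ℓ (xr ω) (ur ω) + d ∧
      (1 - γ) * value P X U f vs ℓ γ (xr ω) ≤ cγ γ + (1 - γ) * (αV Δ + e2) ∧
      cγ γ + d + η (xr ω) + δ < αWl (σ (xr ω)) := by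
    filter_upwards [has] with ω hω
    obtain ⟨hX1, hU1, hσΔ, hA⟩ := hω
    simp only [Ufb, Set.mem_setOf_eq, expValNext] at hU1
    obtain ⟨huU, hub⟩ := hU1
    refine ⟨hub, hdet _ hX1 _ huU, ?_, not_le.mp hA⟩
    have h3 := (hcc γ hγIoo _ hX1).2
    have hm : αV (σ (xr ω)) ≤ αV Δ :=
      hαV.2.1.monotoneOn (mem_Ici.mpr (hσnn _)) (mem_Ici.mpr hΔ.le) hσΔ.le
    have hc : (1 - γ) * (cγ γ / (1 - γ)) = cγ γ := by field_simp
    nlinarith [mul_le_mul_of_nonneg_left h3 h1γ.le, mul_le_mul_of_nonneg_left hm h1γ.le]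
  exact aux_one_step P f (value P X U f vs ℓ γ) W η (fun x => αWl (σ x)) ℓ
    (fun x => value P X U f vs ℓ γ x + W x / γ - γ * cγ γ / (1 - γ) + d + e1)
    v hv hfmeas hVm hWmeas hℓmeas hηmeas haWm (fun _ => ENNReal.toReal_nonneg) hWnn
    γ (cγ γ) d (-(γ * cγ γ / (1 - γ)) + d + e1) (αV Δ + e2) δ hγ0 hγ1
    (fun x => by ring) xr ur hxr hur hindep hgood hint1 hint2
end
end
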